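/- Let A be a complete normed ring (Banach algebra) over ℝ with 1. Let PG denote the set of differentiable maps p : ℝ → A all of whose values are units, with p(0) = 1 and whose logarithmic derivative t ↦ p(t)⁻¹·p′(t) is 2π-periodic. Suppose p₁, p₂ ∈ PG and g is a unit of A with p₂(2π) = g⁻¹·p₁(2π)·g. Then the map γ : ℝ → A defined by γ(θ) = (g⁻¹·p₁(θ)·g)⁻¹·p₂(θ) is differentiable with unit values, satisfies γ(0) = 1, γ(2π) = 1, is 2π-periodic, and g⁻¹·p₁(θ)·g·γ(θ) = p₂(θ) for all θ. -/

import Mathlib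

open Real

variable (A : Type*) [NormedRing A] [NormedAlgebra ℝ A] [CompleteSpace A]

/-- Membership in the path space `PG`: differentiable unit-valued maps `p : ℝ → A` with
`p 0 = 1` whose logarithmic derivative `t ↦ p t ⁻¹ * p' t` is `2π`-periodic. -/
def MemPG (p : ℝ → A) : Prop :=
  Differentiable ℝ p ∧ (∀ t, IsUnit (p t)) ∧ p 0 = 1 ∧
    Function.Periodic (fun t => Ring.inverse (p t) * deriv p t) (2 * π)

/-- A path in `PG` satisfies `p (θ + 2π) = p (2π) * p θ`. -/
theorem MemPG.add_period (p : ℝ → A) (hp : MemPG A p) (θ : ℝ) :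
    p (θ + 2 * π) = p (2 * π) * p θ := by
  obtain ⟨hd, hu, h0, hper⟩ := hp
  set T : ℝ := 2 * π with hT
  -- the function `f t = p (t + T) * (p t)⁻¹` has zero derivative
  set f : ℝ → A := fun t => p (t + T) * Ring.inverse (p t) with hf
  have key : ∀ t : ℝ, HasDerivAt f 0 t := by
    intro t
    obtain ⟨u, hu'⟩ := hu t
    have h1 : HasDerivAt (fun s => p (s + T)) (deriv p (t + T)) t := by
      simpa [Function.comp_def] using HasDerivAt.scomp t (hd (t + T)).hasDerivAt ((hasDerivAt_id t).add_const T)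
    have h2 : HasDerivAt (fun s => Ring.inverse (p s))
        (-(Ring.inverse (p t) * deriv p t * Ring.inverse (p t))) t := by
      have := (hasFDerivAt_ringInverse (𝕜 := ℝ) u)
      rw [hu'] at this
      have h3 := this.comp_hasDerivAt t (hd t).hasDerivAt
      have hinv : (↑u⁻¹ : A) = Ring.inverse (p t) := by rw [← hu', Ring.inverse_unit]
      simpa [ContinuousLinearMap.mulLeftRight_apply, hinv, Function.comp_def] using h3
    have h4 := h1.mul h2
    have h5 : deriv p (t + T) = p (t + T) * (Ring.inverse (p t) * deriv p t) := by
      have h6 := hper t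
      simp only at h6
      rw [← h6, Ring.mul_inverse_cancel_left _ _ (hu (t + T))]
    convert h4 using 1
    · rfl
    rw [h5]
    noncomm_ring
  have hconst : ∀ t : ℝ, f t = f 0 :=
    fun t => is_const_of_deriv_eq_zero (fun s => (key s).differentiableAt)
      (fun s => (key s).deriv) t 0
  have h8 : f θ = p T := by
    rw [hconst θ]; simp [hf, h0, Ring.inverse_one]
  have h9 : f θ * p θ = p (θ + T) := by
    simp only [hf]
    rw [Ring.inverse_mul_cancel_right _ _ (hu θ)]
  rw [← h9, h8]

/-- If `p₁, p₂ ∈ PG` and `g` is a unit with `p₂(2π) = g⁻¹ p₁(2π) g`, then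
`γ = (g⁻¹ p₁ g)⁻¹ p₂` is a based loop (differentiable, unit-valued, `γ(0) = γ(2π) = 1`,
`2π`-periodic) with `g⁻¹ p₁ g γ = p₂`.  This is the injectivity step in identifying
`BLG` with `G ×_G EG`. -/
theorem based_loop_of_same_endpoint (p₁ p₂ : ℝ → A) (hp₁ : MemPG A p₁) (hp₂ : MemPG A p₂)
    (g : Aˣ) (hend : p₂ (2 * π) = ↑g⁻¹ * p₁ (2 * π) * ↑g)
    (γ : ℝ → A) (hγ : ∀ θ, γ θ = Ring.inverse (↑g⁻¹ * p₁ θ * ↑g) * p₂ θ) :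
    Differentiable ℝ γ ∧ (∀ θ, IsUnit (γ θ)) ∧ γ 0 = 1 ∧ γ (2 * π) = 1 ∧
      Function.Periodic γ (2 * π) ∧ ∀ θ, ↑g⁻¹ * p₁ θ * ↑g * γ θ = p₂ θ := by
  obtain ⟨hd₁, hu₁, h0₁, hper₁⟩ := hp₁
  obtain ⟨hd₂, hu₂, h0₂, hper₂⟩ := hp₂
  -- rewrite γ using unit inverses
  have hγ' : ∀ θ, γ θ = ↑g⁻¹ * Ring.inverse (p₁ θ) * ↑g * p₂ θ := by
    intro θ
    obtain ⟨u, hu⟩ := hu₁ θ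
    rw [hγ θ, ← hu]
    have : (↑g⁻¹ * ↑u * ↑g : A) = ↑(g⁻¹ * u * g) := by simp
    rw [this, Ring.inverse_unit, Ring.inverse_unit]
    simp [mul_assoc]
  have hdinv : Differentiable ℝ (fun θ => Ring.inverse (p₁ θ)) := fun θ =>
    (differentiableAt_inverse (𝕜 := ℝ) (hu₁ θ)).comp θ (hd₁ θ)
  refine ⟨?_, ?_, ?_, ?_, ?_, ?_⟩
  · have : Differentiable ℝ (fun θ => ↑g⁻¹ * Ring.inverse (p₁ θ) * ↑g * p₂ θ) :=
      (((differentiable_const _).mul hdinv).mul (differentiable_const _)).mul hd₂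
    exact (funext hγ') ▸ this
  · intro θ
    obtain ⟨u, hu⟩ := hu₁ θ
    rw [hγ' θ, ← hu, Ring.inverse_unit]
    exact (((g⁻¹.isUnit.mul u⁻¹.isUnit).mul g.isUnit).mul (hu₂ θ))
  · rw [hγ' 0, h0₁, h0₂]; simp
  · obtain ⟨u, hu⟩ := hu₁ (2 * π)
    rw [hγ' (2 * π), hend, ← hu, Ring.inverse_unit]
    calc (↑g⁻¹ * ↑u⁻¹ * ↑g * (↑g⁻¹ * ↑u * ↑g) : A)
        = ↑((g⁻¹ * u⁻¹ * g) * (g⁻¹ * u * g)) := by simp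
      _ = 1 := by
          have h : (g⁻¹ * u⁻¹ * g) * (g⁻¹ * u * g) = 1 := by group
          rw [h, Units.val_one]
  · intro θ
    obtain ⟨a, ha⟩ := hu₁ (2 * π)
    obtain ⟨b, hb⟩ := hu₁ θ
    obtain ⟨c, hc⟩ := hu₂ θ
    have h1 := MemPG.add_period A p₁ ⟨hd₁, hu₁, h0₁, hper₁⟩ θ
    have h2 := MemPG.add_period A p₂ ⟨hd₂, hu₂, h0₂, hper₂⟩ θ
    rw [hγ' (θ + 2 * π), hγ' θ, h1, h2, hend, ← ha, ← hb, ← hc]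
    have hab : ((↑a : A) * ↑b) = ↑(a * b) := by simp
    rw [hab, Ring.inverse_unit, Ring.inverse_unit]
    calc (↑g⁻¹ * ↑(a * b)⁻¹ * ↑g * (↑g⁻¹ * ↑a * ↑g * ↑c) : A)
        = ↑(g⁻¹ * (a * b)⁻¹ * g * (g⁻¹ * a * g * c)) := by simp
      _ = ↑(g⁻¹ * b⁻¹ * g * c) := by congr 1; group
      _ = (↑g⁻¹ * ↑b⁻¹ * ↑g * ↑c : A) := by simp
  · intro θ
    obtain ⟨u, hu⟩ := hu₁ θ
    rw [hγ' θ, ← hu, Ring.inverse_unit]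
    calc (↑g⁻¹ * ↑u * ↑g * (↑g⁻¹ * ↑u⁻¹ * ↑g * p₂ θ) : A)
        = ↑((g⁻¹ * u * g) * (g⁻¹ * u⁻¹ * g)) * p₂ θ := by
          simp [mul_assoc]
      _ = p₂ θ := by
          have : (g⁻¹ * u * g) * (g⁻¹ * u⁻¹ * g) = 1 := by group
          rw [this]; simp
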